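/- (Schofield) Let Λ be a finite dimensional hereditary algebra and let M_1, ..., M_k be pairwise nonisomorphic indecomposable Λ-modules with Ext^1_Λ(M_i, M_j) = 0 for all i, j. Then the modules can be renumbered so that Hom_Λ(M_j, M_i) = 0 for all j > i. -/

import Mathlib

/-- `Ext¹_Λ(A, B) = 0`, encoded as: every short exact sequence
`0 → B → E → A → 0` of `Λ`-modules splits. -/
def ExtOneVanish (Λ : Type) [Ring Λ] (A : Type) [AddCommGroup A] [Module Λ A]
    (B : Type) [AddCommGroup B] [Module Λ B] : Prop :=
  ∀ (E : Type) (_ : AddCommGroup E) (_ : Module Λ E)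
    (i : B →ₗ[Λ] E) (p : E →ₗ[Λ] A),
    Function.Injective i → Function.Surjective p →
    LinearMap.range i = LinearMap.ker p →
    ∃ s : A →ₗ[Λ] E, p.comp s = LinearMap.id

/-- A module is indecomposable: it is nonzero and admits no nontrivial direct sum
decomposition. -/
def IsIndecomposableModule (Λ : Type) [Ring Λ] (A : Type) [AddCommGroup A]
    [Module Λ A] : Prop :=
  Nontrivial A ∧ ∀ (N N' : Submodule Λ A), IsCompl N N' → N = ⊥ ∨ N' = ⊥

section Proj
variable {Λ : Type} [Ring Λ]

lemma projective_of_ses {A B : Type} [AddCommGroup A] [Module Λ A]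
    [AddCommGroup B] [Module Λ B]
    (f : A →ₗ[Λ] B) (hsurj : Function.Surjective f)
    (hB : Module.Projective Λ B) (hK : Module.Projective Λ (LinearMap.ker f)) :
    Module.Projective Λ A := by
  obtain ⟨s, hs⟩ := Module.projective_lifting_property f LinearMap.id hsurj
  have hsa : ∀ b, f (s b) = b := fun b => LinearMap.ext_iff.mp hs b
  haveI := hB; haveI := hK
  let i : A →ₗ[Λ] (LinearMap.ker f × B) :=
    LinearMap.prod
      ((LinearMap.id - s.comp f).codRestrict (LinearMap.ker f)
        (by intro a; simp [hsa])) f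
  let π : (LinearMap.ker f × B) →ₗ[Λ] A :=
    (LinearMap.ker f).subtype.comp (LinearMap.fst Λ _ _) + s.comp (LinearMap.snd Λ _ _)
  refine Module.Projective.of_split i π ?_
  ext a
  simp [i, π]

lemma projective_submodule_pi (hhered : ∀ I : Submodule Λ Λ, Module.Projective Λ I) :
    ∀ (m : ℕ) (N : Submodule Λ (Fin m → Λ)), Module.Projective Λ N := by
  intro m
  induction m with
  | zero =>
    intro N
    haveI : Subsingleton (Fin 0 → Λ) := ⟨fun a b => funext fun i => i.elim0⟩
    haveI : Subsingleton N := ⟨fun a b => Subtype.ext (Subsingleton.elim _ _)⟩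
    exact Module.Projective.of_basis (Module.Basis.empty (ι := Empty) N)
  | succ m ih =>
    intro N
    set p : N →ₗ[Λ] Λ := (LinearMap.proj (Fin.last m)).comp N.subtype with hp
    set φ : LinearMap.ker p →ₗ[Λ] (Fin m → Λ) :=
      (LinearMap.funLeft Λ Λ Fin.castSucc).comp (N.subtype.comp (LinearMap.ker p).subtype)
      with hφ
    have hφinj : Function.Injective φ := by
      intro x y hxy
      ext1; ext1
      funext i
      refine Fin.lastCases ?_ ?_ i
      · have hx : (x : N) ∈ LinearMap.ker p := x.2
        have hy : (y : N) ∈ LinearMap.ker p := y.2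
        simp only [LinearMap.mem_ker, hp, LinearMap.comp_apply, LinearMap.proj_apply,
          Submodule.subtype_apply] at hx hy
        exact hx.trans hy.symm
      · intro j
        exact congrFun hxy j
    have hker : Module.Projective Λ (LinearMap.ker p) := by
      have := ih (LinearMap.range φ)
      exact Module.Projective.of_equiv (LinearEquiv.ofInjective φ hφinj).symm
    have hrange : Module.Projective Λ (LinearMap.range p) := hhered _
    have := projective_of_ses p.rangeRestrict p.surjective_rangeRestrict hrange ?_
    · exact this
    · rw [LinearMap.ker_rangeRestrict]
      exact hker

end Proj

section Fitting
variable {Λ : Type} [Ring Λ]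
variable {X : Type} [AddCommGroup X] [Module Λ X]

lemma surj_of_inj_endo (K : Type) [Field K] [Algebra K Λ] [Module K X]
    [IsScalarTower K Λ X] [FiniteDimensional K X]
    (a : X →ₗ[Λ] X) (h : Function.Injective a) :
    Function.Surjective a :=
  (LinearMap.injective_iff_surjective (K := K) (f := a.restrictScalars K)).mp h

lemma inj_of_surj_endo (K : Type) [Field K] [Algebra K Λ] [Module K X]
    [IsScalarTower K Λ X] [FiniteDimensional K X]
    (a : X →ₗ[Λ] X) (h : Function.Surjective a) :
    Function.Injective a :=
  (LinearMap.injective_iff_surjective (K := K) (f := a.restrictScalars K)).mpr h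

lemma fitting (K : Type) [Field K] [Algebra K Λ] [Module K X]
    [IsScalarTower K Λ X] [FiniteDimensional K X]
    (hind : ∀ (N N' : Submodule Λ X), IsCompl N N' → N = ⊥ ∨ N' = ⊥)
    (a : X →ₗ[Λ] X) :
    Function.Bijective a ∨ ∃ n, (a ^ (n + 1) : Module.End Λ X) = 0 := by
  haveI : IsNoetherian Λ X := isNoetherian_of_tower K inferInstance
  haveI : IsArtinian Λ X := isArtinian_of_tower K inferInstance
  obtain ⟨n, hn⟩ := Filter.eventually_atTop.mp (a.eventually_isCompl_ker_pow_range_pow)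
  have hc := hn (n + 1) (Nat.le_succ n)
  rcases hind _ _ hc with h | h
  · left
    have hinj : Function.Injective a := by
      have : Function.Injective ((a ^ (n + 1) : Module.End Λ X) : X →ₗ[Λ] X) := by
        rw [← LinearMap.ker_eq_bot]; exact h
      rw [pow_succ] at this
      exact Function.Injective.of_comp (f := (a ^ n : Module.End Λ X)) this
    exact ⟨hinj, surj_of_inj_endo K a hinj⟩
  · right
    exact ⟨n, LinearMap.range_eq_bot.mp h⟩

lemma isCompl_ker_range_section {I : Type} [AddCommGroup I] [Module Λ I]
    (q : X →ₗ[Λ] I) (s : I →ₗ[Λ] X) (h : q.comp s = LinearMap.id) :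
    IsCompl (LinearMap.ker q) (LinearMap.range s) := by
  have hqs : ∀ b, q (s b) = b := fun b => LinearMap.ext_iff.mp h b
  constructor
  · rw [disjoint_iff]
    refine le_bot_iff.mp ?_
    rintro x ⟨hx1, b, rfl⟩
    have : b = 0 := by rw [← hqs b]; exact hx1
    simp [this]
  · rw [codisjoint_iff, eq_top_iff]
    intro x _
    have : x = (x - s (q x)) + s (q x) := by abel
    rw [this]
    exact Submodule.add_mem_sup (by simp [LinearMap.mem_ker, hqs]) ⟨q x, rfl⟩

end Fitting

section HR

variable (K : Type) [Field K] {Λ : Type} [Ring Λ] [Algebra K Λ]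

set_option maxHeartbeats 1000000 in
/-- The Happel–Ringel lemma. -/
lemma happel_ringel
    (hhered : ∀ I : Submodule Λ Λ, Module.Projective Λ I)
    {X Y : Type} [AddCommGroup X] [Module Λ X] [Module K X] [IsScalarTower K Λ X]
    [FiniteDimensional K X]
    [AddCommGroup Y] [Module Λ Y] [Module K Y] [IsScalarTower K Λ Y]
    [FiniteDimensional K Y]
    (hX : IsIndecomposableModule Λ X) (hY : IsIndecomposableModule Λ Y)
    (hext : ExtOneVanish Λ Y X)
    (f : X →ₗ[Λ] Y) (hf : f ≠ 0) :
    Function.Injective f ∨ Function.Surjective f := by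
  by_contra hcon
  push_neg at hcon
  obtain ⟨hinj, hsurj⟩ := hcon
  set I := LinearMap.range f with hI
  set pr : Y →ₗ[Λ] (Y ⧸ I) := I.mkQ with hpr
  haveI : Module.Finite K Y := inferInstance
  haveI : Module.Finite Λ Y := Module.Finite.of_restrictScalars_finite K Λ Y
  haveI : Module.Finite Λ (Y ⧸ I) :=
    Module.Finite.of_surjective pr (Submodule.mkQ_surjective I)
  obtain ⟨m, π, hπ⟩ := Module.Finite.exists_fin' Λ (Y ⧸ I)
  obtain ⟨ρ, hρ⟩ := Module.projective_lifting_property pr π (Submodule.mkQ_surjective I)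
  set Ω := LinearMap.ker π with hΩ
  haveI hΩproj : Module.Projective Λ Ω := projective_submodule_pi hhered m Ω
  have hρΩ : ∀ ω : Ω, ρ.comp Ω.subtype ω ∈ I := by
    intro ω
    have h1 : pr (ρ ω) = π ω := LinearMap.ext_iff.mp hρ ω
    have h2 : π (ω : Fin m → Λ) = 0 := ω.2
    rw [h2] at h1
    simpa [pr, ← Submodule.Quotient.mk_eq_zero] using h1
  set ρ' : Ω →ₗ[Λ] I := LinearMap.codRestrict I (ρ.comp Ω.subtype) hρΩ with hρ'
  set q : X →ₗ[Λ] I := f.rangeRestrict with hq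
  have hqcoe : ∀ x, (q x : Y) = f x := fun x => rfl
  obtain ⟨ψ, hψ⟩ := Module.projective_lifting_property q ρ' f.surjective_rangeRestrict
  -- the pushout E of (Ω ↪ Fin m → Λ) along ψ
  set w : Ω →ₗ[Λ] X × (Fin m → Λ) := LinearMap.prod ψ (-Ω.subtype) with hw
  set W := LinearMap.range w with hW
  set ι : X →ₗ[Λ] (X × (Fin m → Λ)) ⧸ W := W.mkQ.comp (LinearMap.inl Λ X (Fin m → Λ))
    with hι
  have hσ0 : W ≤ LinearMap.ker (π.comp (LinearMap.snd Λ X (Fin m → Λ))) := by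
    rintro z ⟨ω, rfl⟩
    have : π (-(ω : Fin m → Λ)) = 0 := by
      rw [map_neg, ω.2, neg_zero]
    simpa [hw] using this
  set σ : (X × (Fin m → Λ)) ⧸ W →ₗ[Λ] (Y ⧸ I) :=
    W.liftQ (π.comp (LinearMap.snd Λ X (Fin m → Λ))) hσ0 with hσ
  have hθ0 : W ≤ LinearMap.ker (LinearMap.coprod f ρ) := by
    rintro z ⟨ω, rfl⟩
    have h1 : q (ψ ω) = ρ' ω := LinearMap.ext_iff.mp hψ ω
    have h2 : f (ψ ω) = ρ (ω : Fin m → Λ) := by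
      have := congrArg (fun z : I => (z : Y)) h1
      simpa [hρ', hqcoe] using this
    simp [hw, LinearMap.mem_ker, h2]
  set θ : (X × (Fin m → Λ)) ⧸ W →ₗ[Λ] Y := W.liftQ (LinearMap.coprod f ρ) hθ0 with hθ
  have hθι : ∀ x, θ (ι x) = f x := by
    intro x; simp [hθ, hι, Submodule.liftQ_apply]
  have hσι : ∀ x, σ (ι x) = 0 := by
    intro x; simp [hσ, hι, Submodule.liftQ_apply]
  have hprθ : ∀ e, pr (θ e) = σ e := by
    intro e
    obtain ⟨⟨x, p⟩, rfl⟩ := Submodule.mkQ_surjective W e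
    have hfx : pr (f x) = 0 := by
      simp [pr, ← Submodule.Quotient.mk_eq_zero, Submodule.Quotient.mk_eq_zero]
      exact ⟨x, rfl⟩
    have h1 : pr (ρ p) = π p := LinearMap.ext_iff.mp hρ p
    simp [hθ, hσ, Submodule.liftQ_apply, map_add, hfx, h1]
  have hιinj : Function.Injective ι := by
    rw [injective_iff_map_eq_zero]
    intro x hx
    rw [hι, LinearMap.comp_apply, Submodule.mkQ_apply, Submodule.Quotient.mk_eq_zero] at hx
    obtain ⟨ω, hω⟩ := hx
    have h2 : -(ω : Fin m → Λ) = 0 := congrArg Prod.snd hω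
    have h3 : ω = 0 := by
      ext1; simpa [neg_eq_zero] using h2
    have h1 : ψ ω = x := congrArg Prod.fst hω
    rw [h3, map_zero] at h1
    exact h1.symm
  have hkerσ : ∀ e, σ e = 0 → ∃ x, ι x = e := by
    intro e he
    obtain ⟨⟨x, p⟩, rfl⟩ := Submodule.mkQ_surjective W e
    have hp : p ∈ Ω := by
      have : π p = 0 := by simpa [hσ, Submodule.liftQ_apply] using he
      exact this
    refine ⟨x + ψ ⟨p, hp⟩, ?_⟩
    rw [hι, LinearMap.comp_apply, Submodule.mkQ_apply, Submodule.mkQ_apply]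
    rw [Submodule.Quotient.eq]
    refine ⟨⟨p, hp⟩, ?_⟩
    simp [hw]
  -- the pullback F of σ along pr
  set G : (((X × (Fin m → Λ)) ⧸ W) × Y) →ₗ[Λ] (Y ⧸ I) :=
    σ.comp (LinearMap.fst Λ _ _) - pr.comp (LinearMap.snd Λ _ _) with hG
  set F := LinearMap.ker G with hF
  have hmemF : ∀ z : ((X × (Fin m → Λ)) ⧸ W) × Y, z ∈ F ↔ σ z.1 = pr z.2 := by
    intro z
    rw [hF, LinearMap.mem_ker, hG, LinearMap.sub_apply, sub_eq_zero]
    rfl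
  set iF : X →ₗ[Λ] F := LinearMap.codRestrict F (LinearMap.prod ι 0)
    (fun x => by rw [hmemF]; simp [hσι]) with hiF
  set pF : F →ₗ[Λ] Y := (LinearMap.snd Λ _ _).comp F.subtype with hpF
  have hiFinj : Function.Injective iF := by
    intro x y hxy
    have := congrArg (fun z : F => (z : ((X × (Fin m → Λ)) ⧸ W) × Y).1) hxy
    simp [hiF] at this
    exact hιinj this
  have hpFsurj : Function.Surjective pF := by
    intro y
    obtain ⟨p, hp⟩ := hπ (pr y)
    refine ⟨⟨(W.mkQ (0, p), y), ?_⟩, rfl⟩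
    rw [hmemF]
    simpa [hσ, Submodule.liftQ_apply] using hp
  have hrk : LinearMap.range iF = LinearMap.ker pF := by
    ext z
    constructor
    · rintro ⟨x, rfl⟩
      simp [hpF, hiF, LinearMap.mem_ker]
    · intro hz
      have hz2 : ((z : ((X × (Fin m → Λ)) ⧸ W) × Y)).2 = 0 := hz
      have hz1 : σ ((z : ((X × (Fin m → Λ)) ⧸ W) × Y)).1 = 0 := by
        have := (hmemF _).mp z.2
        rw [hz2, map_zero] at this
        exact this
      obtain ⟨x, hx⟩ := hkerσ _ hz1
      refine ⟨x, ?_⟩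
      apply Subtype.ext
      ext
      · simpa [hiF] using hx
      · simpa [hiF] using hz2.symm
  obtain ⟨s, hs⟩ := hext F inferInstance inferInstance iF pF hiFinj hpFsurj hrk
  have hpFs : ∀ y, pF (s y) = y := fun y => LinearMap.ext_iff.mp hs y
  set e' : Y →ₗ[Λ] (X × (Fin m → Λ)) ⧸ W :=
    ((LinearMap.fst Λ _ _).comp F.subtype).comp s with he'
  have hσe' : ∀ y, σ (e' y) = pr y := by
    intro y
    have h1 := (hmemF _).mp (s y).2
    have h2 : ((s y : ((X × (Fin m → Λ)) ⧸ W) × Y)).2 = y := hpFs y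
    rw [h2] at h1
    exact h1
  set u : Y →ₗ[Λ] Y := θ.comp e' with hu
  have hpru : ∀ y, pr (u y) = pr y := by
    intro y
    rw [hu, LinearMap.comp_apply, hprθ, hσe']
  have he'mem : ∀ i : I, e'.comp I.subtype i ∈ LinearMap.range ι := by
    intro i
    apply hkerσ
    rw [LinearMap.comp_apply, hσe']
    simpa [pr, Submodule.Quotient.mk_eq_zero] using i.2
  set ιe : X ≃ₗ[Λ] LinearMap.range ι := LinearEquiv.ofInjective ι hιinj with hιe
  set g : I →ₗ[Λ] X :=
    (ιe.symm.toLinearMap).comp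
      (LinearMap.codRestrict (LinearMap.range ι) (e'.comp I.subtype) he'mem) with hg
  have hιg : ∀ i : I, ι (g i) = e' (i : Y) := by
    intro i
    have h1 : ιe (g i) = ⟨e' (i : Y), he'mem i⟩ := by
      rw [hg]
      simp only [LinearMap.comp_apply, LinearEquiv.coe_coe]
      rw [LinearEquiv.apply_symm_apply]
      rfl
    have := congrArg (fun z : LinearMap.range ι => (z : (X × (Fin m → Λ)) ⧸ W)) h1
    simpa [hιe, LinearEquiv.ofInjective_apply] using this
  have hfg : ∀ i : I, f (g i) = u (i : Y) := by
    intro i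
    rw [← hθι, hιg, hu, LinearMap.comp_apply]
    rfl
  set b : I →ₗ[Λ] I := q.comp g with hb
  set a : X →ₗ[Λ] X := g.comp q with ha
  haveI : FiniteDimensional K I :=
    FiniteDimensional.of_injective ((I.subtype).restrictScalars K) Subtype.val_injective
  rcases fitting K hX.2 a with hbij | ⟨n, hnil⟩
  · -- a bijective: q splits, contradicting indecomposability of X
    have hqsurj : Function.Surjective q := f.surjective_rangeRestrict
    have hbsurj : Function.Surjective b := by
      intro i
      obtain ⟨x, hx⟩ := hqsurj i
      obtain ⟨x₀, rfl⟩ := hbij.2 x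
      exact ⟨q x₀, by rw [hb, LinearMap.comp_apply]; exact hx⟩
    have hbinj := inj_of_surj_endo K b hbsurj
    set binv := (LinearEquiv.ofBijective b ⟨hbinj, hbsurj⟩).symm with hbinv
    set s' : I →ₗ[Λ] X := g.comp binv.toLinearMap with hs'
    have hqs' : q.comp s' = LinearMap.id := by
      ext i
      have h2 := (LinearEquiv.ofBijective b ⟨hbinj, hbsurj⟩).apply_symm_apply i
      have h3 : q (g (binv i)) = i := h2
      exact congrArg Subtype.val h3
    rcases hX.2 _ _ (isCompl_ker_range_section q s' hqs') with h | h
    · apply hinj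
      rw [← LinearMap.ker_eq_bot, ← f.ker_rangeRestrict]
      exact h
    · apply hf
      have hI0 : ∀ i : I, (i : Y) = 0 := by
        intro i
        have h1 : s' i = 0 := by
          have hm : s' i ∈ LinearMap.range s' := ⟨i, rfl⟩
          rw [h] at hm
          simpa using hm
        have h2 : q (s' i) = i := LinearMap.ext_iff.mp hqs' i
        rw [h1, map_zero] at h2
        rw [← h2]
        rfl
      ext x
      simp only [LinearMap.zero_apply]
      rw [← hqcoe x]
      exact hI0 (q x)
  · -- a nilpotent: I splits off Y, contradicting indecomposability of Y
    have key : ∀ j, (b ^ (j + 1) : Module.End Λ I) =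
        (q.comp ((a ^ j : Module.End Λ X) : X →ₗ[Λ] X)).comp g := by
      intro j
      induction j with
      | zero => ext i; simp [hb]
      | succ j ih =>
        have hsucc : (b ^ (j + 1 + 1) : Module.End Λ I) = (b ^ (j + 1) : Module.End Λ I) * b :=
          pow_succ b (j + 1)
        rw [hsucc, ih]
        ext i
        simp only [Module.End.mul_apply, LinearMap.comp_apply, pow_succ, ha, hb]
    have hbnil : IsNilpotent (b : Module.End Λ I) := by
      refine ⟨n + 2, ?_⟩
      have : (n + 2) = (n + 1) + 1 := rfl
      rw [this, key (n + 1), hnil]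
      ext i; simp
    have hunit := IsNilpotent.isUnit_one_sub hbnil
    have hyu : ∀ y : Y, ((LinearMap.id : Y →ₗ[Λ] Y) - u) y ∈ I := by
      intro y
      have h1 : pr (y - u y) = 0 := by
        rw [map_sub, hpru, sub_self]
      have h2 : y - u y ∈ I := by
        rwa [hpr, Submodule.mkQ_apply, Submodule.Quotient.mk_eq_zero] at h1
      simpa using h2
    set h' : Y →ₗ[Λ] I :=
      LinearMap.codRestrict I ((LinearMap.id : Y →ₗ[Λ] Y) - u) hyu with hh'
    have hh'I : h'.comp I.subtype = ((1 : Module.End Λ I) - b : Module.End Λ I) := by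
      ext i
      have : (h' (i : Y) : Y) = (i : Y) - u (i : Y) := rfl
      simp only [LinearMap.comp_apply, Submodule.subtype_apply, this]
      have hbcoe : ((b i : I) : Y) = f (g i) := by rw [hb, LinearMap.comp_apply, hqcoe]
      simp [LinearMap.sub_apply, Module.End.one_apply, hbcoe, hfg i]
    obtain ⟨v, hv⟩ := hunit
    set r : Y →ₗ[Λ] I := ((↑(v⁻¹) : Module.End Λ I) : I →ₗ[Λ] I).comp h' with hr
    have hrI : r.comp I.subtype = LinearMap.id := by
      rw [hr, LinearMap.comp_assoc, hh'I, ← hv]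
      have := v.inv_mul
      exact_mod_cast this
    rcases hY.2 _ _ (isCompl_ker_range_section r I.subtype hrI) with h | h
    · apply hsurj
      intro y
      have hker : y - I.subtype (r y) ∈ LinearMap.ker r := by
        rw [LinearMap.mem_ker, map_sub]
        have h5 := LinearMap.ext_iff.mp hrI (r y)
        rw [LinearMap.comp_apply, LinearMap.id_apply] at h5
        rw [h5, sub_self]
      rw [h, Submodule.mem_bot, sub_eq_zero] at hker
      obtain ⟨x, hx⟩ := (r y).2
      exact ⟨x, by rw [hx]; exact hker.symm⟩
    · apply hf
      rw [Submodule.range_subtype] at h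
      ext x
      have hx : f x ∈ I := ⟨x, rfl⟩
      rw [h] at hx
      simp only [LinearMap.zero_apply]
      exact (Submodule.mem_bot Λ).mp hx
end HR

/-- The "there is a nonzero homomorphism" relation. -/
def NZHomRel (Λ : Type) [Ring Λ] {k : ℕ} (M : Fin k → Type) [∀ i, AddCommGroup (M i)]
    [∀ i, Module Λ (M i)] : Fin k → Fin k → Prop :=
  fun i j => i ≠ j ∧ ∃ f : M i →ₗ[Λ] M j, f ≠ 0

lemma periodize {α : Type} {R : α → α → Prop} {n : ℕ} (hn : 1 ≤ n) {c : ℕ → α}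
    (hc : c n = c 0) (harr : ∀ j < n, R (c j) (c (j + 1))) :
    ∃ c' : ℕ → α, (∀ j, c' (j + n) = c' j) ∧ ∀ j, R (c' j) (c' (j + 1)) := by
  refine ⟨fun j => c (j % n), fun j => by simp [Nat.add_mod_right], fun j => ?_⟩
  have hjn : j % n < n := Nat.mod_lt _ (by omega)
  show R (c (j % n)) (c ((j + 1) % n))
  rcases Nat.lt_or_ge (j % n + 1) n with hcase | hcase
  · have hnext : (j + 1) % n = j % n + 1 := by
      rw [Nat.add_mod, Nat.mod_eq_of_lt (show 1 < n by omega), Nat.mod_eq_of_lt hcase]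
    rw [hnext]
    exact harr _ hjn
  · have hjn2 : j % n + 1 = n := by omega
    have hnext : (j + 1) % n = 0 := by
      rcases eq_or_lt_of_le hn with h1 | h1
      · rw [← h1, Nat.mod_one]
      · rw [Nat.add_mod, Nat.mod_eq_of_lt h1, hjn2, Nat.mod_self]
    rw [hnext]
    have h5 := harr (j % n) hjn
    rwa [hjn2, hc] at h5

lemma chain_of_transGen {α : Type} {R : α → α → Prop} {a b : α}
    (h : Relation.TransGen R a b) :
    ∃ n, 1 ≤ n ∧ ∃ c : ℕ → α, c 0 = a ∧ c n = b ∧ ∀ j < n, R (c j) (c (j + 1)) := by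
  induction h with
  | @single b' hr =>
    refine ⟨1, le_refl 1, fun j => if j = 0 then a else b', by simp, by simp, ?_⟩
    intro j hj
    have hj0 : j = 0 := by omega
    subst hj0
    simpa using hr
  | @tail b' c' hstep hr ih =>
    obtain ⟨n, hn, c, h0, hb, harr⟩ := ih
    refine ⟨n + 1, by omega, fun j => if j ≤ n then c j else c', ?_, ?_, ?_⟩
    · show (if 0 ≤ n then c 0 else c') = a
      rw [if_pos (Nat.zero_le n)]; exact h0
    · show (if n + 1 ≤ n then c (n + 1) else c') = c'
      rw [if_neg (by omega)]
    · intro j hj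
      show R (if j ≤ n then c j else c') (if j + 1 ≤ n then c (j + 1) else c')
      rcases Nat.lt_or_ge j n with hcase | hcase
      · rw [if_pos (by omega), if_pos (by omega)]
        exact harr j hcase
      · have hjn : j = n := by omega
        rw [if_pos (by omega), if_neg (by omega), hjn, hb]
        exact hr

section Cycles
variable (K : Type) [Field K] {Λ : Type} [Ring Λ] [Algebra K Λ]
variable {k : ℕ} {M : Fin k → Type}
variable [∀ i, AddCommGroup (M i)] [∀ i, Module Λ (M i)]
  [∀ i, Module K (M i)] [∀ i, IsScalarTower K Λ (M i)] [∀ i, FiniteDimensional K (M i)]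

include K

lemma dim_lt_of_inj (hnoniso : ∀ i j, i ≠ j → IsEmpty (M i ≃ₗ[Λ] M j))
    {a b : Fin k} (hab : a ≠ b) (f : M a →ₗ[Λ] M b) (hfi : Function.Injective f) :
    Module.finrank K (M a) < Module.finrank K (M b) := by
  have hle : Module.finrank K (M a) ≤ Module.finrank K (M b) :=
    LinearMap.finrank_le_finrank_of_injective (f := f.restrictScalars K) hfi
  rcases lt_or_eq_of_le hle with h | h
  · exact h
  · exfalso
    have hsurj : Function.Surjective f :=
      (LinearMap.injective_iff_surjective_of_finrank_eq_finrank
        (f := f.restrictScalars K) h).mp hfi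
    exact (hnoniso a b hab).false (LinearEquiv.ofBijective f ⟨hfi, hsurj⟩)

lemma dim_lt_of_surj (hnoniso : ∀ i j, i ≠ j → IsEmpty (M i ≃ₗ[Λ] M j))
    {a b : Fin k} (hab : a ≠ b) (f : M a →ₗ[Λ] M b) (hfs : Function.Surjective f) :
    Module.finrank K (M b) < Module.finrank K (M a) := by
  have h1 := LinearMap.finrank_range_add_finrank_ker (f.restrictScalars K)
  have hrange : LinearMap.range (f.restrictScalars K) = ⊤ := LinearMap.range_eq_top.mpr hfs
  rw [hrange, finrank_top] at h1
  have hle : Module.finrank K (M b) ≤ Module.finrank K (M a) := by omega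
  rcases lt_or_eq_of_le hle with h | h
  · exact h
  · exfalso
    have hinj : Function.Injective f :=
      (LinearMap.injective_iff_surjective_of_finrank_eq_finrank
        (f := f.restrictScalars K) h.symm).mpr hfs
    exact (hnoniso a b hab).false (LinearEquiv.ofBijective f ⟨hinj, hfs⟩)

lemma two_cycle
    (hhered : ∀ I : Submodule Λ Λ, Module.Projective Λ I)
    (hind : ∀ i, IsIndecomposableModule Λ (M i))
    (hnoniso : ∀ i j, i ≠ j → IsEmpty (M i ≃ₗ[Λ] M j))
    (hext : ∀ i j, ExtOneVanish Λ (M i) (M j))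
    {a b : Fin k} (hab : a ≠ b)
    (f : M a →ₗ[Λ] M b) (hf : f ≠ 0) (g : M b →ₗ[Λ] M a) (hg : g ≠ 0) : False := by
  have hgiso : ¬ Function.Bijective g := fun hb =>
    (hnoniso b a (Ne.symm hab)).false (LinearEquiv.ofBijective g hb)
  have hfiso : ¬ Function.Bijective f := fun hb =>
    (hnoniso a b hab).false (LinearEquiv.ofBijective f hb)
  rcases happel_ringel K hhered (hind a) (hind b) (hext b a) f hf with hfi | hfs
  · rcases happel_ringel K hhered (hind b) (hind a) (hext a b) g hg with hgi | hgs
    · -- both injective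
      have hcomp : Function.Injective (g.comp f) := by
        rw [LinearMap.coe_comp]; exact hgi.comp hfi
      have hsurj := surj_of_inj_endo K (g.comp f) hcomp
      rw [LinearMap.coe_comp] at hsurj
      exact hgiso ⟨hgi, hsurj.of_comp⟩
    · -- f injective, g surjective
      set u := f.comp g with hu
      have hu0 : u ≠ 0 := by
        obtain ⟨x, hx⟩ : ∃ x, g x ≠ 0 := by
          by_contra hh; push_neg at hh; exact hg (LinearMap.ext hh)
        intro h0
        have h1 : f (g x) = 0 := by
          have := LinearMap.ext_iff.mp h0 x
          simpa [hu] using this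
        exact hx (hfi (by rw [h1, map_zero]))
      rcases happel_ringel K hhered (hind b) (hind b) (hext b b) u hu0 with hui | hus
      · have hgi : Function.Injective g := by
          intro x y hxy
          apply hui
          simp only [hu, LinearMap.comp_apply, hxy]
        exact hgiso ⟨hgi, hgs⟩
      · have hfs : Function.Surjective f := by
          intro z
          obtain ⟨y, hy⟩ := hus z
          exact ⟨g y, hy⟩
        exact hfiso ⟨hfi, hfs⟩
  · rcases happel_ringel K hhered (hind b) (hind a) (hext a b) g hg with hgi | hgs
    · -- f surjective, g injective
      set u := g.comp f with hu
      have hu0 : u ≠ 0 := by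
        obtain ⟨x, hx⟩ : ∃ x, f x ≠ 0 := by
          by_contra hh; push_neg at hh; exact hf (LinearMap.ext hh)
        intro h0
        have h1 : g (f x) = 0 := by
          have := LinearMap.ext_iff.mp h0 x
          simpa [hu] using this
        exact hx (hgi (by rw [h1, map_zero]))
      rcases happel_ringel K hhered (hind a) (hind a) (hext a a) u hu0 with hui | hus
      · have hfi : Function.Injective f := by
          intro x y hxy
          apply hui
          simp only [hu, LinearMap.comp_apply, hxy]
        exact hfiso ⟨hfi, hfs⟩
      · have hgs : Function.Surjective g := by
          intro z
          obtain ⟨y, hy⟩ := hus z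
          exact ⟨f y, hy⟩
        exact hgiso ⟨hgi, hgs⟩
    · -- both surjective
      have hcomp : Function.Surjective (g.comp f) := by
        rw [LinearMap.coe_comp]; exact hgs.comp hfs
      have hinj := inj_of_surj_endo K (g.comp f) hcomp
      rw [LinearMap.coe_comp] at hinj
      exact hfiso ⟨hinj.of_comp, hfs⟩

lemma no_cycle_aux
    (hhered : ∀ I : Submodule Λ Λ, Module.Projective Λ I)
    (hind : ∀ i, IsIndecomposableModule Λ (M i))
    (hnoniso : ∀ i j, i ≠ j → IsEmpty (M i ≃ₗ[Λ] M j))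
    (hext : ∀ i j, ExtOneVanish Λ (M i) (M j)) :
    ∀ n, 1 ≤ n → ∀ c : ℕ → Fin k,
      (∀ j, c (j + n) = c j) → (∀ j, NZHomRel Λ M (c j) (c (j + 1))) → False := by
  intro n
  induction n using Nat.strong_induction_on with
  | _ n IH =>
  intro hn c hper harr
  rcases Nat.lt_or_ge n 2 with h2 | h2
  · -- n = 1
    have hn1 : n = 1 := by omega
    subst hn1
    exact (harr 0).1 (hper 0).symm
  · -- choose a vertex of minimal dimension
    set d : ℕ → ℕ := fun j => Module.finrank K (M (c j)) with hd
    obtain ⟨i, hiIcc, himin⟩ :=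
      Finset.exists_min_image (Finset.Icc 1 n) d ⟨1, by simp; omega⟩
    rw [Finset.mem_Icc] at hiIcc
    obtain ⟨hi1, hin⟩ := hiIcc
    have hct : ∀ t x, c (x + n * t) = c x := by
      intro t
      induction t with
      | zero => simp
      | succ t iht =>
        intro x
        rw [Nat.mul_succ, ← add_assoc, hper, iht]
    have hmin : ∀ j, d i ≤ d j := by
      intro j
      have hrep : c j = c (j % n) := by
        conv_lhs => rw [← Nat.mod_add_div j n]
        exact hct (j / n) (j % n)
      rcases Nat.eq_zero_or_pos (j % n) with h0 | hpos
      · have hcj : c j = c n := by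
          rw [hrep, h0, ← hper 0]
          norm_num
        have : d j = d n := by rw [hd]; simp only []; rw [hcj]
        rw [this]
        exact himin n (Finset.mem_Icc.mpr ⟨by omega, le_refl n⟩)
      · have hmem : j % n ∈ Finset.Icc 1 n :=
          Finset.mem_Icc.mpr ⟨hpos, (Nat.mod_lt _ (by omega)).le⟩
        have : d j = d (j % n) := by rw [hd]; simp only []; rw [hrep]
        rw [this]
        exact himin _ hmem
    -- the two arrows at the minimal vertex
    have hi' : i - 1 + 1 = i := by omega
    have h1 := harr (i - 1)
    rw [hi'] at h1
    obtain ⟨hne1, f₁, hf₁⟩ := h1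
    obtain ⟨hne2, f₂, hf₂⟩ := harr i
    have hf₁s : Function.Surjective f₁ := by
      rcases happel_ringel K hhered (hind _) (hind _) (hext _ _) f₁ hf₁ with h | h
      · exact absurd (dim_lt_of_inj K hnoniso hne1 f₁ h) (not_lt.mpr (hmin (i - 1)))
      · exact h
    have hf₂i : Function.Injective f₂ := by
      rcases happel_ringel K hhered (hind _) (hind _) (hext _ _) f₂ hf₂ with h | h
      · exact h
      · exact absurd (dim_lt_of_surj K hnoniso hne2 f₂ h) (not_lt.mpr (hmin (i + 1)))
    have hcomp0 : f₂.comp f₁ ≠ 0 := by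
      haveI := (hind (c i)).1
      obtain ⟨y, hy⟩ := exists_ne (0 : M (c i))
      obtain ⟨x, rfl⟩ := hf₁s y
      intro h0
      have h1 : f₂ (f₁ x) = 0 := by
        have := LinearMap.ext_iff.mp h0 x
        simpa using this
      exact hy (hf₂i (by rw [h1, map_zero]))
    by_cases hee : c (i - 1) = c (i + 1)
    · -- a two-cycle
      have hgex : ∃ gmap : M (c i) →ₗ[Λ] M (c (i - 1)), gmap ≠ 0 := by
        rw [hee]; exact ⟨f₂, hf₂⟩
      obtain ⟨gmap, hgmap⟩ := hgex
      exact two_cycle K hhered hind hnoniso hext hne1 f₁ hf₁ gmap hgmap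
    · -- shorten the cycle
      have harrn : NZHomRel Λ M (c (i - 1)) (c (i + 1)) := ⟨hee, f₂.comp f₁, hcomp0⟩
      set cc : ℕ → Fin k := fun j => if j = n - 1 then c (i + 1) else c (i + 1 + j) with hcc
      have hcc0 : cc (n - 1) = cc 0 := by
        have h01 : ¬ (0 : ℕ) = n - 1 := by omega
        simp [hcc, h01]
      have hccarr : ∀ j < n - 1, NZHomRel Λ M (cc j) (cc (j + 1)) := by
        intro j hj
        rcases Nat.lt_or_ge j (n - 2) with hcase | hcase
        · have e1 : cc j = c (i + 1 + j) := by
            have hj1 : ¬ j = n - 1 := by omega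
            simp [hcc, hj1]
          have e2 : cc (j + 1) = c (i + 1 + j + 1) := by
            have hj1 : ¬ j + 1 = n - 1 := by omega
            have harith : i + 1 + (j + 1) = i + 1 + j + 1 := by omega
            simp [hcc, hj1, harith]
          rw [e1, e2]
          exact harr (i + 1 + j)
        · have hj2 : j = n - 2 := by omega
          have e1 : cc j = c (i - 1) := by
            have hj1 : ¬ j = n - 1 := by omega
            have harith : i + 1 + j = i - 1 + n := by omega
            simp only [hcc, if_neg hj1]
            rw [harith, hper (i - 1)]
          have e2 : cc (j + 1) = c (i + 1) := by
            simp only [hcc, if_pos (show j + 1 = n - 1 by omega)]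
          rw [e1, e2]
          exact harrn
      obtain ⟨c'', hper'', harr''⟩ := periodize (by omega : 1 ≤ n - 1) hcc0 hccarr
      exact IH (n - 1) (by omega) (by omega) c'' hper'' harr''

lemma no_transGen_cycle
    (hhered : ∀ I : Submodule Λ Λ, Module.Projective Λ I)
    (hind : ∀ i, IsIndecomposableModule Λ (M i))
    (hnoniso : ∀ i j, i ≠ j → IsEmpty (M i ≃ₗ[Λ] M j))
    (hext : ∀ i j, ExtOneVanish Λ (M i) (M j)) (a : Fin k) :
    ¬ Relation.TransGen (NZHomRel Λ M) a a := by
  intro h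
  obtain ⟨n, hn, c, h0, hnn, harr⟩ := chain_of_transGen h
  obtain ⟨c', hper, harr'⟩ := periodize hn (by rw [hnn, h0]) harr
  exact no_cycle_aux K hhered hind hnoniso hext n hn c' hper harr'

end Cycles

/-- Schofield: Let `Λ` be a finite dimensional hereditary algebra over a
field `K` and `M₁, …, M_k` pairwise nonisomorphic finite dimensional indecomposable
`Λ`-modules with `Ext¹_Λ(M_i, M_j) = 0` for all `i, j`.  Then the modules can be
renumbered so that `Hom_Λ(M_j, M_i) = 0` for all `j > i`, i.e. they form an exceptional
sequence. -/
theorem schofield_exceptional_ordering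
    (K : Type) [Field K] (Λ : Type) [Ring Λ] [Algebra K Λ] [FiniteDimensional K Λ]
    -- Λ is hereditary: every (right) ideal is projective
    (hhered : ∀ I : Submodule Λ Λ, Module.Projective Λ I)
    (k : ℕ) (M : Fin k → Type)
    [∀ i, AddCommGroup (M i)] [∀ i, Module Λ (M i)]
    [∀ i, Module K (M i)] [∀ i, IsScalarTower K Λ (M i)] [∀ i, FiniteDimensional K (M i)]
    (hind : ∀ i, IsIndecomposableModule Λ (M i))
    (hnoniso : ∀ i j, i ≠ j → IsEmpty (M i ≃ₗ[Λ] M j))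
    (hext : ∀ i j, ExtOneVanish Λ (M i) (M j)) :
    ∃ e : Equiv.Perm (Fin k), ∀ i j : Fin k, i < j →
      ∀ f : M (e j) →ₗ[Λ] M (e i), f = 0 := by
  classical
  set T := Relation.TransGen (NZHomRel Λ M) with hT
  have hirr : ∀ a, ¬ T a a := no_transGen_cycle K hhered hind hnoniso hext
  haveI : IsTrans (Fin k) T := ⟨fun _ _ _ h1 h2 => Relation.TransGen.trans h1 h2⟩
  haveI : IsIrrefl (Fin k) T := ⟨hirr⟩
  have hwf : WellFounded T := Finite.wellFounded_of_trans_of_irrefl T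
  have hlist : ∀ s : Finset (Fin k), ∃ l : List (Fin k), l.Nodup ∧ l.toFinset = s ∧
      l.Pairwise (fun x y => ¬ T y x) := by
    intro s
    induction s using Finset.strongInduction with
    | _ s ih =>
      rcases s.eq_empty_or_nonempty with rfl | hne
      · exact ⟨[], by simp, by simp, by simp⟩
      · obtain ⟨x, hxs, hxmin⟩ := hwf.has_min (↑s) (Finset.coe_nonempty.mpr hne)
        obtain ⟨l, hnd, hts, hpw⟩ := ih (s.erase x) (Finset.erase_ssubset hxs)
        refine ⟨x :: l, ?_, ?_, ?_⟩
        · rw [List.nodup_cons]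
          refine ⟨?_, hnd⟩
          intro hx
          rw [← List.mem_toFinset, hts] at hx
          exact (Finset.notMem_erase x s) hx
        · rw [List.toFinset_cons, hts, Finset.insert_erase hxs]
        · refine List.Pairwise.cons ?_ hpw
          intro y hy
          have hys : y ∈ s := (Finset.erase_subset x s)
            (by rw [← hts]; exact List.mem_toFinset.mpr hy)
          exact hxmin y hys
  obtain ⟨l, hnd, hts, hpw⟩ := hlist Finset.univ
  have hlen : l.length = k := by
    have h1 := List.toFinset_card_of_nodup hnd
    rw [hts] at h1
    simpa using h1.symm
  set e : Fin k → Fin k := fun i => l.get (Fin.cast hlen.symm i) with he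
  have heinj : Function.Injective e := by
    intro i j hij
    have hg := List.nodup_iff_injective_get.mp hnd hij
    have hg' : (Fin.cast hlen.symm i).val = (Fin.cast hlen.symm j).val := congrArg Fin.val hg
    exact Fin.ext hg'
  have hbij := Finite.injective_iff_bijective.mp heinj
  refine ⟨Equiv.ofBijective e hbij, ?_⟩
  intro i j hij f
  by_contra hf0
  have hne : Equiv.ofBijective e hbij j ≠ Equiv.ofBijective e hbij i := by
    intro hh
    exact absurd (heinj hh) (by omega)
  have hR : NZHomRel Λ M (Equiv.ofBijective e hbij j) (Equiv.ofBijective e hbij i) :=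
    ⟨hne, f, hf0⟩
  have hTji : T (e j) (e i) := Relation.TransGen.single hR
  have hpg := List.pairwise_iff_get.mp hpw (Fin.cast hlen.symm i) (Fin.cast hlen.symm j)
    (by exact hij)
  exact hpg hTji
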